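/- For any l ≥ 2 and any u in H^l_0(0,L), the first derivative satisfies the interpolation inequality ‖Du‖_{L^2} ≤ ‖D^l u‖_{L^2}^{1/l} · ‖u‖_{L^2}^{1 - 1/l}. -/

import Mathlib

private lemma chain_aux (l : ℕ) (a : ℕ → ℝ) (hpos : ∀ i, 0 ≤ a i)
    (h : ∀ i, i + 2 ≤ l → a (i+1) ^ 2 ≤ a i * a (i+2)) :
    ∀ k, k + 2 ≤ l → a 1 * a (k+1) ≤ a 0 * a (k+2) := by
  intro k
  induction k with
  | zero => intro hk; have := h 0 hk; nlinarith [hpos 1]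
  | succ n ih =>
    intro hk
    have h1 := ih (by omega)
    have h2 := h (n+1) hk
    rcases eq_or_lt_of_le (hpos (n+2)) with h0 | h0
    · have : a 1 * a (n+1+1) = 0 := by rw [show n+1+1 = n+2 from rfl, ← h0]; ring
      rw [this]
      exact mul_nonneg (hpos 0) (hpos _)
    · have key : (a 1 * a (n+2)) * a (n+2) ≤ (a 0 * a (n+3)) * a (n+2) := by
        nlinarith [mul_le_mul_of_nonneg_left h2 (hpos 1),
          mul_le_mul_of_nonneg_right h1 (hpos (n+3))]
      exact le_of_mul_le_mul_right key h0

private lemma chain_pow (l : ℕ) (a : ℕ → ℝ) (hpos : ∀ i, 0 ≤ a i)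
    (h : ∀ i, i + 2 ≤ l → a (i+1) ^ 2 ≤ a i * a (i+2)) :
    ∀ k, k + 1 ≤ l → a 1 ^ (k+1) ≤ a 0 ^ k * a (k+1) := by
  intro k
  induction k with
  | zero => intro _; simp
  | succ n ih =>
    intro hk
    have h1 := ih (by omega)
    have h2 := chain_aux l a hpos h n hk
    calc a 1 ^ (n+1+1) = a 1 ^ (n+1) * a 1 := by ring
      _ ≤ (a 0 ^ n * a (n+1)) * a 1 :=
          mul_le_mul_of_nonneg_right h1 (hpos 1)
      _ = a 0 ^ n * (a 1 * a (n+1)) := by ring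
      _ ≤ a 0 ^ n * (a 0 * a (n+2)) :=
          mul_le_mul_of_nonneg_left h2 (pow_nonneg (hpos 0) n)
      _ = a 0 ^ (n+1) * a (n+1+1) := by ring

/-- For `l ≥ 2` and `u ∈ H^l₀(0,L)`:
`‖Du‖ ≤ ‖D^l u‖^{1/l} ‖u‖^{1-1/l}`.
Here `D i` denotes the `i`-th derivative of `u = D 0`. -/
theorem stmt_2 (L : ℝ) (hL : 0 < L) (l : ℕ) (hl : 2 ≤ l) (D : ℕ → ℝ → ℝ)
    (hderiv : ∀ i < l, ∀ x ∈ Set.Icc (0:ℝ) L, HasDerivAt (D i) (D (i+1) x) x)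
    (hint : ∀ i ≤ l, IntervalIntegrable (fun x => (D i x)^2) MeasureTheory.volume 0 L)
    (hbc : ∀ i < l, D i 0 = 0 ∧ D i L = 0) :
    (∫ x in (0:ℝ)..L, (D 1 x)^2) ^ ((1:ℝ)/2)
      ≤ (∫ x in (0:ℝ)..L, (D l x)^2) ^ (1/(2*(l:ℝ)))
        * (∫ x in (0:ℝ)..L, (D 0 x)^2) ^ ((1 - 1/(l:ℝ))/2) := by
  have hL' : (0:ℝ) ≤ L := hL.le
  set μ : MeasureTheory.Measure ℝ :=
    MeasureTheory.volume.restrict (Set.Ioc (0:ℝ) L) with hμ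
  haveI : MeasureTheory.IsFiniteMeasure μ := by
    constructor
    rw [hμ, MeasureTheory.Measure.restrict_apply_univ, Real.volume_Ioc]
    exact ENNReal.ofReal_lt_top
  set I : ℕ → ℝ := fun i => ∫ x in (0:ℝ)..L, (D i x)^2 with hIdef
  have hInonneg : ∀ i, 0 ≤ I i := fun i =>
    intervalIntegral.integral_nonneg hL' (fun x _ => sq_nonneg _)
  have hIμ : ∀ i, I i = ∫ x, (D i x)^2 ∂μ := fun i =>
    intervalIntegral.integral_of_le hL'
  have hcont : ∀ i < l, ContinuousOn (D i) (Set.Icc 0 L) := fun i hi x hx =>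
    (hderiv i hi x hx).continuousAt.continuousWithinAt
  have hmeas : ∀ i ≤ l, MeasureTheory.AEStronglyMeasurable (D i) μ := by
    intro i hi
    rcases lt_or_eq_of_le hi with hi' | rfl
    · exact ((hcont i hi').mono Set.Ioc_subset_Icc_self).aestronglyMeasurable
        measurableSet_Ioc
    · have hl1 : i - 1 < i := by omega
      have key : ∀ x ∈ Set.Icc (0:ℝ) L, deriv (D (i-1)) x = D i x := by
        intro x hx
        have h := hderiv (i-1) hl1 x hx
        rw [Nat.sub_add_cancel (by omega : 1 ≤ i)] at h
        exact h.deriv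
      refine ((measurable_deriv (D (i-1))).aestronglyMeasurable.restrict).congr ?_
      rw [Filter.EventuallyEq, MeasureTheory.ae_restrict_iff' measurableSet_Ioc]
      exact Filter.Eventually.of_forall fun x hx => key x (Set.Ioc_subset_Icc_self hx)
  have hsq : ∀ i ≤ l, MeasureTheory.Integrable (fun x => (D i x)^2) μ := fun i hi =>
    (intervalIntegrable_iff_integrableOn_Ioc_of_le hL').1 (hint i hi)
  have hmem : ∀ i ≤ l, MeasureTheory.MemLp (D i) 2 μ := fun i hi =>
    (MeasureTheory.memLp_two_iff_integrable_sq (hmeas i hi)).2 (hsq i hi)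
  have hone : ∀ i ≤ l, IntervalIntegrable (D i) MeasureTheory.volume 0 L := by
    intro i hi
    rw [intervalIntegrable_iff_integrableOn_Ioc_of_le hL']
    have hc : MeasureTheory.Integrable (fun _ : ℝ => (1:ℝ)) μ :=
      MeasureTheory.integrable_const 1
    refine (((hsq i hi).add hc).div_const 2).mono' (hmeas i hi) ?_
    refine Filter.Eventually.of_forall fun x => ?_
    simp only [Pi.add_apply, Real.norm_eq_abs]
    nlinarith [sq_abs (D i x), abs_nonneg (D i x), sq_nonneg (|D i x| - 1)]
  have hCS : ∀ i ≤ l, ∀ j ≤ l,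
      |∫ x in (0:ℝ)..L, D i x * D j x| ≤ Real.sqrt (I i) * Real.sqrt (I j) := by
    intro i hi j hj
    have h2 : Real.HolderConjugate 2 2 := Real.holderConjugate_iff.2 ⟨one_lt_two, by norm_num⟩
    have hmi : MeasureTheory.MemLp (D i) (ENNReal.ofReal 2) μ := by
      simpa [ENNReal.ofReal_ofNat] using hmem i hi
    have hmj : MeasureTheory.MemLp (D j) (ENNReal.ofReal 2) μ := by
      simpa [ENNReal.ofReal_ofNat] using hmem j hj
    have h := MeasureTheory.integral_mul_norm_le_Lp_mul_Lq h2 hmi hmj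
    have hnorm2 : ∀ y : ℝ, ‖y‖ ^ (2:ℝ) = y ^ 2 := fun y => by
      rw [show (2:ℝ) = ((2:ℕ):ℝ) by norm_num, Real.rpow_natCast, Real.norm_eq_abs, sq_abs]
    have hInt : ∫ x in (0:ℝ)..L, D i x * D j x = ∫ x, D i x * D j x ∂μ :=
      intervalIntegral.integral_of_le hL'
    rw [hInt]
    calc |∫ x, D i x * D j x ∂μ| ≤ ∫ x, ‖D i x * D j x‖ ∂μ := by
          rw [← Real.norm_eq_abs]
          exact MeasureTheory.norm_integral_le_integral_norm _
      _ = ∫ x, ‖D i x‖ * ‖D j x‖ ∂μ := by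
          congr 1; funext x; rw [norm_mul]
      _ ≤ (∫ x, ‖D i x‖ ^ (2:ℝ) ∂μ) ^ ((1:ℝ)/2) * (∫ x, ‖D j x‖ ^ (2:ℝ) ∂μ) ^ ((1:ℝ)/2) := h
      _ = Real.sqrt (I i) * Real.sqrt (I j) := by
          simp_rw [hnorm2]
          rw [hIμ i, hIμ j, Real.sqrt_eq_rpow, Real.sqrt_eq_rpow]
  have key : ∀ i, i + 2 ≤ l → I (i+1) ^ 2 ≤ I i * I (i+2) := by
    intro i h2l
    have hu : ∀ x ∈ Set.uIcc (0:ℝ) L, HasDerivAt (D i) (D (i+1) x) x := by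
      rw [Set.uIcc_of_le hL']; exact hderiv i (by omega)
    have hv : ∀ x ∈ Set.uIcc (0:ℝ) L, HasDerivAt (D (i+1)) (D (i+2) x) x := by
      rw [Set.uIcc_of_le hL']; exact hderiv (i+1) (by omega)
    have ibp := intervalIntegral.integral_mul_deriv_eq_deriv_mul hu hv
      (hone (i+1) (by omega)) (hone (i+2) h2l)
    have hb0 := hbc i (by omega)
    have hsq' : I (i+1) = ∫ x in (0:ℝ)..L, D (i+1) x * D (i+1) x := by
      show (∫ x in (0:ℝ)..L, D (i+1) x ^ 2) = _
      simp only [pow_two]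
    have hEq : ∫ x in (0:ℝ)..L, D i x * D (i+2) x = -(I (i+1)) := by
      rw [ibp, hb0.1, hb0.2, hsq']; ring
    have hle : I (i+1) ≤ Real.sqrt (I i) * Real.sqrt (I (i+2)) := by
      have := hCS i (by omega) (i+2) h2l
      rw [hEq, abs_neg, abs_of_nonneg (hInonneg (i+1))] at this
      exact this
    have hsqr : (Real.sqrt (I i) * Real.sqrt (I (i+2))) ^ 2 = I i * I (i+2) := by
      rw [mul_pow, Real.sq_sqrt (hInonneg i), Real.sq_sqrt (hInonneg (i+2))]
    calc I (i+1) ^ 2 ≤ (Real.sqrt (I i) * Real.sqrt (I (i+2))) ^ 2 :=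
          pow_le_pow_left₀ (hInonneg (i+1)) hle 2
      _ = I i * I (i+2) := hsqr
  have main : I 1 ^ l ≤ I 0 ^ (l-1) * I l := by
    have h := chain_pow l I hInonneg key (l-1) (by omega)
    rwa [Nat.sub_add_cancel (by omega : 1 ≤ l)] at h
  have hn : (0:ℝ) < (l:ℝ) := by positivity
  have hcast : ((l-1:ℕ):ℝ) = (l:ℝ) - 1 := by
    rw [Nat.cast_sub (by omega : 1 ≤ l), Nat.cast_one]
  have h1 : I 1 ≤ (I 0) ^ (((l:ℝ)-1) * (l:ℝ)⁻¹) * (I l) ^ ((l:ℝ)⁻¹) := by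
    calc I 1 = ((I 1) ^ (l:ℕ)) ^ ((l:ℝ)⁻¹) := by
          rw [← Real.rpow_natCast (I 1) l, ← Real.rpow_mul (hInonneg 1),
            mul_inv_cancel₀ hn.ne', Real.rpow_one]
      _ ≤ ((I 0) ^ (l-1:ℕ) * I l) ^ ((l:ℝ)⁻¹) :=
          Real.rpow_le_rpow (pow_nonneg (hInonneg 1) l) main (by positivity)
      _ = (I 0) ^ (((l:ℝ)-1) * (l:ℝ)⁻¹) * (I l) ^ ((l:ℝ)⁻¹) := by
          rw [Real.mul_rpow (pow_nonneg (hInonneg 0) _) (hInonneg l),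
            ← Real.rpow_natCast (I 0) (l-1), ← Real.rpow_mul (hInonneg 0), hcast]
  show (I 1) ^ ((1:ℝ)/2) ≤ (I l) ^ (1/(2*(l:ℝ))) * (I 0) ^ ((1 - 1/(l:ℝ))/2)
  calc (I 1) ^ ((1:ℝ)/2)
      ≤ ((I 0) ^ (((l:ℝ)-1) * (l:ℝ)⁻¹) * (I l) ^ ((l:ℝ)⁻¹)) ^ ((1:ℝ)/2) :=
        Real.rpow_le_rpow (hInonneg 1) h1 (by norm_num)
    _ = (I l) ^ (1/(2*(l:ℝ))) * (I 0) ^ ((1 - 1/(l:ℝ))/2) := by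
        rw [Real.mul_rpow (Real.rpow_nonneg (hInonneg 0) _) (Real.rpow_nonneg (hInonneg l) _),
          ← Real.rpow_mul (hInonneg 0), ← Real.rpow_mul (hInonneg l), mul_comm]
        congr 1
        · congr 1; field_simp
        · congr 1; field_simp
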